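/- Let r ≥ 2 and 1 ≤ a, b ≤ r − 1, and let G be the cyclic group of type (1/r)(1, a, b), i.e. n = 3 with weight map wt(m) = m_1 + a·m_2 + b·m_3 mod r on ℤ^3. Then Γ := {l·e_1 : 0 ≤ l ≤ r − 1} (the set of exponent vectors of 1, x_1, x_1^2, …, x_1^{r−1}) is a G-brick, and S(Γ) = {u ∈ ℤ^3 : u_2 ≥ 0, u_3 ≥ 0, u_1 + a·u_2 + b·u_3 ≥ 0, and r divides u_1 + a·u_2 + b·u_3}; the latter set equals σ_1^∨ ∩ M for the cone σ_1 = Cone(v, e_2, e_3) of the star subdivision of the positive octant at v = (1/r)(1, a, b). -/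

import Mathlib

open scoped BigOperators

/-- The `k`-th round down function of the star subdivision at `v = (1/r)(a 1, …, a n)`. -/
def roundDown (n : ℕ) (r : ℕ) (a : Fin n → ℕ) (k : Fin n) (m : Fin n → ℤ) :
    Fin n → ℤ :=
  Function.update m k (Int.fdiv (∑ j, (a j : ℤ) * m j) (r : ℤ))

/-- A weight map `ℤⁿ → ℤ/sℤ`, `m ↦ ∑ j, b j * m j mod s`. -/
def wmap (n s : ℕ) (b : Fin n → ℤ) (m : Fin n → ℤ) : ZMod s :=
  ((∑ j, b j * m j : ℤ) : ZMod s)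

/-- Coercion of a vector of naturals to a vector of integers. -/
def natVec {n : ℕ} (p : Fin n → ℕ) : Fin n → ℤ := fun j => (p j : ℤ)

/-- A `w`-prebrick for the weight map `wmap n s b`: a subset `Γ ⊆ ℤⁿ` containing `0`,
on which the weight map restricts to a bijection onto `ℤ/sℤ`, closed under "division"
(if `γ + p + q ∈ Γ` with `p, q ∈ ℕⁿ` and `γ ∈ Γ` then `γ + p ∈ Γ`), and connected
(every element joined to `0` by a path inside `Γ` with steps `± e_i`). -/
def IsPrebrick (n s : ℕ) (b : Fin n → ℤ) (Γ : Set (Fin n → ℤ)) : Prop :=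
  (0 : Fin n → ℤ) ∈ Γ ∧
  Set.BijOn (wmap n s b) Γ Set.univ ∧
  (∀ γ ∈ Γ, ∀ p q : Fin n → ℕ,
    γ + natVec p + natVec q ∈ Γ → γ + natVec p ∈ Γ) ∧
  (∀ γ ∈ Γ, ∃ (N : ℕ) (c : ℕ → Fin n → ℤ), c 0 = γ ∧ c N = 0 ∧
    (∀ t ≤ N, c t ∈ Γ) ∧
    (∀ t < N, ∃ i : Fin n,
      c (t + 1) = c t + Pi.single i 1 ∨ c (t + 1) = c t - Pi.single i 1))

/-- Generators of the monoid `S(Γ)`: elements `p + γ - w_Γ(p + γ)` where `p ∈ ℕⁿ`,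
`γ ∈ Γ` and `w_Γ(p + γ)` is the (unique) element `γ' ∈ Γ` of the same weight as `p + γ`. -/
def brickGens (n s : ℕ) (b : Fin n → ℤ) (Γ : Set (Fin n → ℤ)) : Set (Fin n → ℤ) :=
  {d | ∃ p : Fin n → ℕ, ∃ γ ∈ Γ, ∃ γ' ∈ Γ,
    wmap n s b (natVec p + γ) = wmap n s b γ' ∧ d = natVec p + γ - γ'}

/-- The submonoid `S(Γ)` of `(ℤⁿ, +)`. -/
def SGamma (n s : ℕ) (b : Fin n → ℤ) (Γ : Set (Fin n → ℤ)) :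
    AddSubmonoid (Fin n → ℤ) :=
  AddSubmonoid.closure (brickGens n s b Γ)

/-- A `w`-brick: a `w`-prebrick with `S(Γ) ∩ (-S(Γ)) = {0}`. -/
def IsBrick (n s : ℕ) (b : Fin n → ℤ) (Γ : Set (Fin n → ℤ)) : Prop :=
  IsPrebrick n s b Γ ∧
  ∀ d ∈ SGamma n s b Γ, -d ∈ SGamma n s b Γ → d = 0

/-- `Γ := {0, e₁, 2e₁, …, (r-1)e₁}`, the exponent set of `1, x₁, …, x₁^{r-1}`. -/
def powersOfX1 (r : ℕ) : Set (Fin 3 → ℤ) :=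
  {m | ∃ l : ℕ, l ≤ r - 1 ∧ m = (l : ℤ) • Pi.single (0 : Fin 3) (1 : ℤ)}

lemma wsum_eq (a b : ℕ) (m : Fin 3 → ℤ) :
    (∑ j, (![1,(a:ℤ),(b:ℤ)] j) * m j) = m 0 + a * m 1 + b * m 2 := by
  simp [Fin.sum_univ_three]

lemma wmap_eq_iff (r a b : ℕ) (m m' : Fin 3 → ℤ) :
    wmap 3 r ![1,(a:ℤ),(b:ℤ)] m = wmap 3 r ![1,(a:ℤ),(b:ℤ)] m' ↔
      (r:ℤ) ∣ (m' 0 + a * m' 1 + b * m' 2) - (m 0 + a * m 1 + b * m 2) := by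
  unfold wmap
  rw [wsum_eq, wsum_eq]
  exact (ZMod.intCast_eq_intCast_iff _ _ r).trans Int.modEq_iff_dvd

lemma mem_powersOfX1_iff (r : ℕ) (hr : 1 ≤ r) (m : Fin 3 → ℤ) :
    m ∈ powersOfX1 r ↔ 0 ≤ m 0 ∧ m 0 ≤ (r:ℤ) - 1 ∧ m 1 = 0 ∧ m 2 = 0 := by
  constructor
  · rintro ⟨l, hl, rfl⟩
    simp only [Pi.smul_apply, smul_eq_mul, Pi.single_apply]
    norm_num
    omega
  · rintro ⟨h0, h1, h2, h3⟩
    refine ⟨(m 0).toNat, by omega, ?_⟩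
    funext j
    fin_cases j <;>
      simp_all [Pi.single_apply, Int.toNat_of_nonneg h0]

/-- The target set as an AddSubmonoid. -/
def Tset (r a b : ℕ) : AddSubmonoid (Fin 3 → ℤ) where
  carrier := {u : Fin 3 → ℤ | 0 ≤ u 1 ∧ 0 ≤ u 2 ∧ 0 ≤ u 0 + (a : ℤ) * u 1 + (b : ℤ) * u 2 ∧
        (r : ℤ) ∣ u 0 + (a : ℤ) * u 1 + (b : ℤ) * u 2}
  zero_mem' := by simp
  add_mem' := by
    rintro x y ⟨h1, h2, h3, h4⟩ ⟨k1, k2, k3, k4⟩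
    refine ⟨by simpa using add_nonneg h1 k1, by simpa using add_nonneg h2 k2, ?_, ?_⟩
    · simp only [Pi.add_apply]; linarith
    · have := dvd_add h4 k4
      simp only [Pi.add_apply]
      rw [show x 0 + y 0 + (a:ℤ) * (x 1 + y 1) + (b:ℤ) * (x 2 + y 2) = x 0 + (a:ℤ) * x 1 + (b:ℤ) * x 2 + (y 0 + (a:ℤ) * y 1 + (b:ℤ) * y 2) by ring]; exact this

lemma SGamma_le_Tset (r a b : ℕ) (hr : 1 ≤ r) :
    SGamma 3 r ![1,(a:ℤ),(b:ℤ)] (powersOfX1 r) ≤ Tset r a b := by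
  apply AddSubmonoid.closure_le.mpr
  rintro d ⟨p, γ, hγ, γ', hγ', hw, rfl⟩
  rw [mem_powersOfX1_iff r hr] at hγ hγ'
  rw [wmap_eq_iff] at hw
  obtain ⟨k, hk⟩ := hw
  obtain ⟨hg0, hg1, hg2, hg3⟩ := hγ
  obtain ⟨hh0, hh1, hh2, hh3⟩ := hγ'
  simp only [natVec, Pi.add_apply, Pi.sub_apply] at hk
  rw [hg2, hg3, hh2, hh3] at hk
  have hr' : (0:ℤ) < r := by exact_mod_cast hr
  have hA : (0:ℤ) ≤ (a:ℤ) * (p 1:ℤ) := by positivity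
  have hB : (0:ℤ) ≤ (b:ℤ) * (p 2:ℤ) := by positivity
  have hp0 : (0:ℤ) ≤ (p 0:ℤ) := Int.natCast_nonneg _
  refine ⟨?_, ?_, ?_, ?_⟩ <;>
    simp only [natVec, Pi.add_apply, Pi.sub_apply]
  · rw [hg2, hh2]; omega
  · rw [hg3, hh3]; omega
  · rw [hg2, hg3, hh2, hh3]
    have hkey : (p 0:ℤ) + γ 0 - γ' 0 + (a:ℤ) * ((p 1:ℤ) + 0 - 0)
        + (b:ℤ) * ((p 2:ℤ) + 0 - 0) = -((r:ℤ) * k) := by linarith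
    rw [hkey]
    have hlt : (r:ℤ) * k < (r:ℤ) * 1 := by rw [mul_one]; linarith
    have hk1 : k ≤ 0 := by
      have := (mul_lt_mul_iff_right₀ hr').mp hlt; omega
    nlinarith [mul_nonneg hr'.le (neg_nonneg.mpr hk1)]
  · rw [hg2, hg3, hh2, hh3]
    exact ⟨-k, by linarith⟩

lemma single_mem_gens (r a b : ℕ) (hr : 2 ≤ r) (ha1 : 1 ≤ a) (ha2 : a ≤ r - 1)
    (hb1 : 1 ≤ b) (hb2 : b ≤ r - 1) :
    (![(r:ℤ),0,0] ∈ brickGens 3 r ![1,(a:ℤ),(b:ℤ)] (powersOfX1 r)) ∧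
    (![-(a:ℤ),1,0] ∈ brickGens 3 r ![1,(a:ℤ),(b:ℤ)] (powersOfX1 r)) ∧
    (![-(b:ℤ),0,1] ∈ brickGens 3 r ![1,(a:ℤ),(b:ℤ)] (powersOfX1 r)) := by
  have hΓ : ∀ l : ℕ, l ≤ r - 1 → ((l:ℤ) • Pi.single (0:Fin 3) (1:ℤ) : Fin 3 → ℤ) ∈ powersOfX1 r :=
    fun l hl => ⟨l, hl, rfl⟩
  refine ⟨?_, ?_, ?_⟩
  · refine ⟨![1,0,0], (((r-1:ℕ):ℤ) • Pi.single (0:Fin 3) (1:ℤ)), hΓ _ le_rfl,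
      0, ⟨0, by omega, by simp⟩, ?_, ?_⟩
    · rw [wmap_eq_iff]
      refine ⟨-1, ?_⟩
      simp [natVec, Pi.single_apply]
      push_cast
      omega
    · funext j
      fin_cases j <;> simp [natVec, Pi.single_apply] <;> push_cast <;> omega
  · refine ⟨![0,1,0], 0, ⟨0, by omega, by simp⟩,
      (((a:ℕ):ℤ) • Pi.single (0:Fin 3) (1:ℤ)), hΓ a ha2, ?_, ?_⟩
    · rw [wmap_eq_iff]
      refine ⟨0, ?_⟩
      simp [natVec, Pi.single_apply]
    · funext j
      fin_cases j <;> simp [natVec, Pi.single_apply]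
  · refine ⟨![0,0,1], 0, ⟨0, by omega, by simp⟩,
      (((b:ℕ):ℤ) • Pi.single (0:Fin 3) (1:ℤ)), hΓ b hb2, ?_, ?_⟩
    · rw [wmap_eq_iff]
      refine ⟨0, ?_⟩
      simp [natVec, Pi.single_apply]
    · funext j
      fin_cases j <;> simp [natVec, Pi.single_apply]

lemma Tset_le_SGamma (r a b : ℕ) (hr : 2 ≤ r) (ha1 : 1 ≤ a) (ha2 : a ≤ r - 1)
    (hb1 : 1 ≤ b) (hb2 : b ≤ r - 1) (u : Fin 3 → ℤ)
    (h : u ∈ Tset r a b) : u ∈ SGamma 3 r ![1,(a:ℤ),(b:ℤ)] (powersOfX1 r) := by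
  obtain ⟨h1, h2, h3, k, hk⟩ := h
  obtain ⟨g1, g2, g3⟩ := single_mem_gens r a b hr ha1 ha2 hb1 hb2
  have hk0 : 0 ≤ k := by nlinarith
  have hu : u = (u 1).toNat • ![-(a:ℤ),1,0] + (u 2).toNat • ![-(b:ℤ),0,1]
      + k.toNat • ![(r:ℤ),0,0] := by
    have e1 : ((u 1).toNat : ℤ) = u 1 := Int.toNat_of_nonneg h1
    have e2 : ((u 2).toNat : ℤ) = u 2 := Int.toNat_of_nonneg h2
    have e3 : (k.toNat : ℤ) = k := Int.toNat_of_nonneg hk0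
    funext j
    fin_cases j <;>
      simp [sup_eq_left.mpr h1, sup_eq_left.mpr h2, sup_eq_left.mpr hk0] <;>
      linarith
  rw [hu]
  exact AddSubmonoid.add_mem _
    (AddSubmonoid.add_mem _
      (AddSubmonoid.nsmul_mem _ (AddSubmonoid.subset_closure g2) _)
      (AddSubmonoid.nsmul_mem _ (AddSubmonoid.subset_closure g3) _))
    (AddSubmonoid.nsmul_mem _ (AddSubmonoid.subset_closure g1) _)

lemma isPrebrick_powers (r a b : ℕ) (hr : 2 ≤ r) :
    IsPrebrick 3 r ![1,(a:ℤ),(b:ℤ)] (powersOfX1 r) := by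
  have hr1 : 1 ≤ r := by omega
  refine ⟨⟨0, by omega, by simp⟩, ⟨fun _ _ => trivial, ?_, ?_⟩, ?_, ?_⟩
  · -- InjOn
    rintro m ⟨l, hl, rfl⟩ m' ⟨l', hl', rfl⟩ heq
    rw [wmap_eq_iff] at heq
    simp [Pi.single_apply] at heq
    have h0 : (l':ℤ) - l = 0 :=
      Int.eq_zero_of_abs_lt_dvd heq (abs_sub_lt_iff.mpr ⟨by push_cast; omega, by push_cast; omega⟩)
    have : l = l' := by omega
    rw [this]
  · -- SurjOn
    intro c _
    haveI : NeZero r := ⟨by omega⟩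
    refine ⟨((c.val : ℕ):ℤ) • Pi.single (0:Fin 3) (1:ℤ),
      ⟨c.val, by have := c.val_lt; omega, rfl⟩, ?_⟩
    unfold wmap
    rw [wsum_eq]
    simp [Pi.single_apply]
  · -- division closure
    intro γ hγ p q hmem
    rw [mem_powersOfX1_iff r hr1] at hγ hmem ⊢
    simp only [Pi.add_apply, natVec] at hmem ⊢
    omega
  · -- connectivity
    rintro γ ⟨l, hl, rfl⟩
    refine ⟨l, fun t => ((l:ℤ) - t) • Pi.single (0:Fin 3) (1:ℤ), by simp, by simp, ?_, ?_⟩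
    · intro t ht
      refine ⟨l - t, by omega, ?_⟩
      have : (((l - t : ℕ)):ℤ) = (l:ℤ) - t := by omega
      rw [this]
    · intro t ht
      refine ⟨0, Or.inr ?_⟩
      funext j
      by_cases hj : j = 0 <;> simp [hj, Pi.single_apply] <;> push_cast <;> ring

/-- For the cyclic group of type `(1/r)(1,a,b)`: the set `Γ` of exponent vectors of
`1, x₁, …, x₁^{r-1}` is a `G`-brick; `S(Γ)` is the explicit set
`{u : u₂ ≥ 0, u₃ ≥ 0, u₁ + a·u₂ + b·u₃ ≥ 0, r ∣ u₁ + a·u₂ + b·u₃}`; and this set equals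
`σ₁^∨ ∩ M` for the cone `σ₁ = Cone(v, e₂, e₃)` of the star subdivision at
`v = (1/r)(1,a,b)`, where `M` is the lattice of `G`-invariant (Laurent) monomials. -/
theorem stmt_17 (r a b : ℕ) (hr : 2 ≤ r) (ha1 : 1 ≤ a) (ha2 : a ≤ r - 1)
    (hb1 : 1 ≤ b) (hb2 : b ≤ r - 1) :
    IsBrick 3 r ![1, (a : ℤ), (b : ℤ)] (powersOfX1 r) ∧
    (SGamma 3 r ![1, (a : ℤ), (b : ℤ)] (powersOfX1 r) : Set (Fin 3 → ℤ)) =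
      {u : Fin 3 → ℤ | 0 ≤ u 1 ∧ 0 ≤ u 2 ∧ 0 ≤ u 0 + (a : ℤ) * u 1 + (b : ℤ) * u 2 ∧
        (r : ℤ) ∣ u 0 + (a : ℤ) * u 1 + (b : ℤ) * u 2} ∧
    {u : Fin 3 → ℤ | 0 ≤ u 1 ∧ 0 ≤ u 2 ∧ 0 ≤ u 0 + (a : ℤ) * u 1 + (b : ℤ) * u 2 ∧
        (r : ℤ) ∣ u 0 + (a : ℤ) * u 1 + (b : ℤ) * u 2} =
      {u : Fin 3 → ℤ |
        (r : ℤ) ∣ u 0 + (a : ℤ) * u 1 + (b : ℤ) * u 2 ∧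
        ∀ x : Fin 3 → ℚ,
          (∃ s t w : ℚ, 0 ≤ s ∧ 0 ≤ t ∧ 0 ≤ w ∧
            x = s • (![(1 : ℚ) / r, (a : ℚ) / r, (b : ℚ) / r] : Fin 3 → ℚ) +
              t • (Pi.single (1 : Fin 3) (1 : ℚ) : Fin 3 → ℚ) + w • (Pi.single (2 : Fin 3) (1 : ℚ) : Fin 3 → ℚ)) →
          0 ≤ ∑ j, x j * (u j : ℚ)} := by
  have hr1 : 1 ≤ r := by omega
  have hrq : (0:ℚ) < r := by exact_mod_cast (by omega : 0 < r)
  refine ⟨⟨isPrebrick_powers r a b hr, ?_⟩, ?_, ?_⟩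
  · -- brick condition
    intro d hd hnd
    obtain ⟨a1, a2, a3, a4⟩ := SGamma_le_Tset r a b hr1 hd
    obtain ⟨b1, b2, b3, b4⟩ := SGamma_le_Tset r a b hr1 hnd
    simp only [Pi.neg_apply] at b1 b2 b3
    have e1 : d 1 = 0 := by linarith
    have e2 : d 2 = 0 := by linarith
    rw [e1, e2] at a3 b3
    simp at a3 b3
    have e0 : d 0 = 0 := by linarith
    funext j
    fin_cases j <;> simp <;> assumption
  · -- S(Γ) = explicit set
    ext u
    exact ⟨fun h => SGamma_le_Tset r a b hr1 h,
      fun h => Tset_le_SGamma r a b hr ha1 ha2 hb1 hb2 u h⟩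
  · -- explicit set = dual cone description
    ext u
    simp only [Set.mem_setOf_eq]
    constructor
    · rintro ⟨h1, h2, h3, h4⟩
      refine ⟨h4, ?_⟩
      rintro x ⟨s, t, w, hs, ht, hw, rfl⟩
      have c1 : (0:ℚ) ≤ (u 1 : ℚ) := by exact_mod_cast h1
      have c2 : (0:ℚ) ≤ (u 2 : ℚ) := by exact_mod_cast h2
      have c3 : (0:ℚ) ≤ (u 0 : ℚ) + a * u 1 + b * u 2 := by exact_mod_cast h3
      have key : ∑ j, (s • (![(1 : ℚ) / r, (a : ℚ) / r, (b : ℚ) / r] : Fin 3 → ℚ) +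
              t • (Pi.single (1 : Fin 3) (1 : ℚ) : Fin 3 → ℚ) +
              w • (Pi.single (2 : Fin 3) (1 : ℚ) : Fin 3 → ℚ)) j * (u j : ℚ)
          = s / r * ((u 0 : ℚ) + a * u 1 + b * u 2) + t * u 1 + w * u 2 := by
        simp only [Fin.sum_univ_three, Pi.add_apply, Pi.smul_apply, smul_eq_mul,
          Pi.single_apply, Matrix.cons_val_zero, Matrix.cons_val_one, Matrix.head_cons,
          Matrix.cons_val_two, Matrix.tail_cons]
        norm_num [Fin.ext_iff]
        field_simp
        ring
      rw [key]
      have := add_nonneg (add_nonneg (mul_nonneg (div_nonneg hs hrq.le) c3)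
        (mul_nonneg ht c1)) (mul_nonneg hw c2)
      exact this
    · rintro ⟨hdvd, hall⟩
      have hx1 := hall (Pi.single (1 : Fin 3) (1 : ℚ))
        ⟨0, 1, 0, le_rfl, zero_le_one, le_rfl, by funext j; simp⟩
      have hx2 := hall (Pi.single (2 : Fin 3) (1 : ℚ))
        ⟨0, 0, 1, le_rfl, le_rfl, zero_le_one, by funext j; simp⟩
      have hx3 := hall (![(1 : ℚ) / r, (a : ℚ) / r, (b : ℚ) / r])
        ⟨1, 0, 0, zero_le_one, le_rfl, le_rfl, by funext j; simp⟩
      simp [Fin.sum_univ_three, Pi.single_apply] at hx1 hx2 hx3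
      have k1 : (0:ℤ) ≤ u 1 := by exact_mod_cast hx1
      have k2 : (0:ℤ) ≤ u 2 := by exact_mod_cast hx2
      have hsum : ∀ (X : ℚ), 0 ≤ X / r → 0 ≤ X := fun X h =>
        (div_nonneg_iff.mp h).resolve_right (fun ⟨_, hc⟩ => absurd hrq (by linarith)) |>.1
      have k3 : (0:ℚ) ≤ (u 0 : ℚ) + a * u 1 + b * u 2 := by
        apply hsum
        rw [div_eq_mul_inv]
        ring_nf
        ring_nf at hx3
        convert hx3 using 1
        ring
      exact ⟨k1, k2, by exact_mod_cast k3, hdvd⟩
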